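/- Let C ⊆ ℝⁿ be nonempty closed convex and let (y_k)_{k≥1} be a uniformly bounded sequence in ℝⁿ with running averages ȳ_k := (1/k) Σ_{j=1}^k y_j. If ⟨ȳ_k − proj_C(ȳ_k), y_{k+1} − proj_C(ȳ_k)⟩ ≤ 0 for all k, then dist(ȳ_k, C) → 0 as k → ∞. -/

import Mathlib

open Filter

/-- Blackwell's approachability principle: if a uniformly bounded
sequence (y_k)_{k≥1} satisfies ⟨ȳ_k − proj_C(ȳ_k), y_{k+1} − proj_C(ȳ_k)⟩ ≤ 0 for
all k ≥ 1, where ȳ_k = (1/k)Σ_{j=1}^k y_j, then dist(ȳ_k, C) → 0. -/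
theorem blackwell_approachability {n : ℕ} (C : Set (EuclideanSpace ℝ (Fin n)))
    (hC : C.Nonempty) (hCl : IsClosed C) (hCo : Convex ℝ C)
    (P : EuclideanSpace ℝ (Fin n) → EuclideanSpace ℝ (Fin n))
    (hP : ∀ x, P x ∈ C ∧ ∀ z ∈ C, ‖x - P x‖ ≤ ‖x - z‖)
    (y : ℕ → EuclideanSpace ℝ (Fin n)) (L : ℝ)
    (hbound : ∀ k, ‖y k‖ ≤ L)
    (avg : ℕ → EuclideanSpace ℝ (Fin n))
    (havg : ∀ k, avg k = (k : ℝ)⁻¹ • ∑ j ∈ Finset.Icc 1 k, y j)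
    (happr : ∀ k ≥ 1,
      (inner ℝ (avg k - P (avg k)) (y (k + 1) - P (avg k)) : ℝ) ≤ 0) :
    Tendsto (fun k => Metric.infDist (avg k) C) atTop (nhds 0) := by
  obtain ⟨c, hc⟩ := hC
  have hL0 : 0 ≤ L := le_trans (norm_nonneg _) (hbound 0)
  set M : ℝ := (3 * L + ‖c‖) ^ 2 with hMdef
  have hM0 : 0 ≤ M := sq_nonneg _
  have hB0 : 0 ≤ 3 * L + ‖c‖ := by positivity
  -- the averages are bounded by L
  have havgn : ∀ k : ℕ, 1 ≤ k → ‖avg k‖ ≤ L := by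
    intro k hk
    have hk0 : (0:ℝ) < (k:ℝ) := by exact_mod_cast hk
    rw [havg k, norm_smul]
    have hsum : ‖∑ j ∈ Finset.Icc 1 k, y j‖ ≤ (k : ℝ) * L := by
      calc ‖∑ j ∈ Finset.Icc 1 k, y j‖ ≤ ∑ j ∈ Finset.Icc 1 k, ‖y j‖ :=
            norm_sum_le _ _
        _ ≤ ∑ _j ∈ Finset.Icc 1 k, L := Finset.sum_le_sum fun j _ => hbound j
        _ = (k : ℝ) * L := by
            rw [Finset.sum_const, Nat.card_Icc, Nat.add_sub_cancel,
              nsmul_eq_mul]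
    calc ‖((k:ℝ)⁻¹)‖ * ‖∑ j ∈ Finset.Icc 1 k, y j‖
        ≤ ‖((k:ℝ)⁻¹)‖ * ((k:ℝ) * L) := by
          apply mul_le_mul_of_nonneg_left hsum (norm_nonneg _)
      _ = L := by
          rw [Real.norm_eq_abs, abs_of_pos (by positivity)]
          field_simp
  -- norm of projection points of averages
  have hPnorm : ∀ k : ℕ, 1 ≤ k → ‖avg k - P (avg k)‖ ≤ L + ‖c‖ := by
    intro k hk
    calc ‖avg k - P (avg k)‖ ≤ ‖avg k - c‖ := (hP (avg k)).2 c hc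
      _ ≤ ‖avg k‖ + ‖c‖ := norm_sub_le _ _
      _ ≤ L + ‖c‖ := by linarith [havgn k hk]
  -- key recursion bound
  have key : ∀ k : ℕ, 1 ≤ k →
      (k : ℝ) ^ 2 * ‖avg k - P (avg k)‖ ^ 2 ≤ (k : ℝ) * M := by
    intro k hk
    induction k with
    | zero => omega
    | succ k ih =>
      rcases Nat.eq_or_lt_of_le hk with h1 | h1
      · -- base case k+1 = 1
        have hk1 : k = 0 := by omega
        subst hk1
        norm_num
        have h := hPnorm 1 le_rfl
        calc ‖avg 1 - P (avg 1)‖ ^ 2 ≤ (L + ‖c‖) ^ 2 := by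
              apply pow_le_pow_left₀ (norm_nonneg _) h
          _ ≤ M := by
              rw [hMdef]
              apply pow_le_pow_left₀ (by positivity)
              linarith
      · have hk1 : 1 ≤ k := by omega
        have ihk := ih hk1
        have hk0 : ((k:ℝ)) ≠ 0 := by
          exact_mod_cast Nat.pos_of_ne_zero (by omega) |>.ne'
        have hkk : (0:ℝ) ≤ (k:ℝ) := by positivity
        have hk1' : ((k:ℝ) + 1) ≠ 0 := by positivity
        set a := avg k with ha
        set p := P (avg k) with hp
        set z := y (k + 1) with hz
        -- decomposition of avg (k+1) - p
        have hsum : (∑ j ∈ Finset.Icc 1 k, y j) = (k : ℝ) • a := by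
          rw [ha, havg k, smul_smul, mul_inv_cancel₀ hk0, one_smul]
        have hrec : avg (k + 1) - p
            = (((k:ℝ) + 1)⁻¹) • ((k : ℝ) • (a - p) + (z - p)) := by
          rw [havg (k + 1), Finset.sum_Icc_succ_top (by omega), hsum]
          push_cast
          match_scalars <;> (field_simp; try ring)
        -- norm bound for z - p
        have hzp : ‖z - p‖ ≤ 3 * L + ‖c‖ := by
          have h1 : ‖p‖ ≤ 2 * L + ‖c‖ := by
            calc ‖p‖ ≤ ‖a‖ + ‖a - p‖ := by
                  have := norm_sub_le a (a - p)
                  simpa using this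
              _ ≤ L + (L + ‖c‖) := add_le_add (havgn k hk1) (hPnorm k hk1)
              _ = 2 * L + ‖c‖ := by ring
          calc ‖z - p‖ ≤ ‖z‖ + ‖p‖ := norm_sub_le _ _
            _ ≤ L + (2 * L + ‖c‖) := add_le_add (hbound _) h1
            _ = 3 * L + ‖c‖ := by ring
        have hzp2 : ‖z - p‖ ^ 2 ≤ M := by
          rw [hMdef]
          exact pow_le_pow_left₀ (norm_nonneg _) hzp 2
        -- expansion of the squared norm
        have hinner := happr k hk1
        have hexp : ‖(k : ℝ) • (a - p) + (z - p)‖ ^ 2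
            = (k:ℝ)^2 * ‖a - p‖^2 + 2 * (k:ℝ) * (inner ℝ (a - p) (z - p) : ℝ)
              + ‖z - p‖^2 := by
          rw [norm_add_sq_real, norm_smul, real_inner_smul_left,
            Real.norm_natCast, mul_pow]
          ring
        have hmain : ‖(k : ℝ) • (a - p) + (z - p)‖ ^ 2
            ≤ (k:ℝ)^2 * ‖a - p‖^2 + M := by
          rw [hexp]
          have h2 : 2 * (k:ℝ) * (inner ℝ (a - p) (z - p) : ℝ) ≤ 0 := by
            apply mul_nonpos_of_nonneg_of_nonpos (by positivity) hinner
          linarith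
        -- the projection of avg (k+1) does at least as well as p
        have hproj : ‖avg (k+1) - P (avg (k+1))‖ ^ 2 ≤ ‖avg (k+1) - p‖ ^ 2 := by
          apply pow_le_pow_left₀ (norm_nonneg _)
          exact (hP (avg (k+1))).2 p (hP (avg k)).1
        have hnorm1 : ‖avg (k+1) - p‖ ^ 2
            = (((k:ℝ)+1)⁻¹)^2 * ‖(k : ℝ) • (a - p) + (z - p)‖ ^ 2 := by
          rw [hrec, norm_smul, mul_pow, Real.norm_eq_abs, sq_abs]
        have hfin : ((k:ℝ)+1)^2 * ‖avg (k+1) - P (avg (k+1))‖ ^ 2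
            ≤ ((k:ℝ)+1) * M := by
          calc ((k:ℝ)+1)^2 * ‖avg (k+1) - P (avg (k+1))‖ ^ 2
              ≤ ((k:ℝ)+1)^2 * ‖avg (k+1) - p‖ ^ 2 := by
                apply mul_le_mul_of_nonneg_left hproj (by positivity)
            _ = ‖(k : ℝ) • (a - p) + (z - p)‖ ^ 2 := by
                rw [hnorm1]; field_simp
            _ ≤ (k:ℝ)^2 * ‖a - p‖^2 + M := hmain
            _ ≤ (k:ℝ) * M + M := by linarith
            _ = ((k:ℝ)+1) * M := by ring
        push_cast
        convert hfin using 2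
  -- conclude via squeeze
  have hsq : Tendsto (fun k : ℕ => Real.sqrt (M * (k:ℝ)⁻¹)) atTop (nhds 0) := by
    have h0 : Tendsto (fun k : ℕ => ((k:ℝ))⁻¹) atTop (nhds 0) :=
      tendsto_inv_atTop_zero.comp tendsto_natCast_atTop_atTop
    have h1 : Tendsto (fun k : ℕ => M * (k:ℝ)⁻¹) atTop (nhds 0) := by
      simpa using h0.const_mul M
    simpa using h1.sqrt
  apply squeeze_zero' (g := fun k : ℕ => Real.sqrt (M * (k:ℝ)⁻¹)) _ _ hsq
  · exact Eventually.of_forall fun k => Metric.infDist_nonneg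
  · filter_upwards [eventually_ge_atTop 1] with k hk
    have hk0 : (0:ℝ) < (k:ℝ) := by exact_mod_cast hk
    have h1 : Metric.infDist (avg k) C ≤ ‖avg k - P (avg k)‖ := by
      have := Metric.infDist_le_dist_of_mem (x := avg k) (hP (avg k)).1
      rwa [dist_eq_norm] at this
    have h2 : ‖avg k - P (avg k)‖ ^ 2 ≤ M * (k:ℝ)⁻¹ := by
      have hkey := key k hk
      rw [show M * ((k:ℝ))⁻¹ = M / (k:ℝ) from (div_eq_mul_inv M _).symm,
        le_div_iff₀ hk0]
      nlinarith [hkey, hk0]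
    have h3 : ‖avg k - P (avg k)‖ ≤ Real.sqrt (M * (k:ℝ)⁻¹) := by
      rw [← Real.sqrt_sq (norm_nonneg (avg k - P (avg k)))]
      exact Real.sqrt_le_sqrt h2
    linarith
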